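/- For an integrable random variable U and a bounded real random variable T: E[U | T] = 0 almost surely if and only if E[U · (cos(tT) + sin(tT))] = 0 for all t ∈ ℝ. -/

import Mathlib

open MeasureTheory Set

section Aux

/-! ### Trigonometric product formulas -/

lemma cos_mul_cos' (a b : ℝ) :
    Real.cos a * Real.cos b = (Real.cos (a - b) + Real.cos (a + b)) / 2 := by
  rw [Real.cos_sub, Real.cos_add]; ring

lemma sin_mul_sin' (a b : ℝ) :
    Real.sin a * Real.sin b = (Real.cos (a - b) - Real.cos (a + b)) / 2 := by
  rw [Real.cos_sub, Real.cos_add]; ring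

lemma sin_mul_cos' (a b : ℝ) :
    Real.sin a * Real.cos b = (Real.sin (a + b) + Real.sin (a - b)) / 2 := by
  rw [Real.sin_add, Real.sin_sub]; ring

lemma cos_mul_sin' (a b : ℝ) :
    Real.cos a * Real.sin b = (Real.sin (a + b) - Real.sin (a - b)) / 2 := by
  rw [Real.sin_add, Real.sin_sub]; ring

/-! ### The trigonometric subalgebra on a compact interval -/

variable (C : ℝ)

/-- `x ↦ cos (t x)` as a continuous map on `Icc (-C) C`. -/
noncomputable def ctMap (t : ℝ) : C((Icc (-C) C : Set ℝ), ℝ) :=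
  ⟨fun x => Real.cos (t * (x : ℝ)), by fun_prop⟩

/-- `x ↦ sin (t x)` as a continuous map on `Icc (-C) C`. -/
noncomputable def stMap (t : ℝ) : C((Icc (-C) C : Set ℝ), ℝ) :=
  ⟨fun x => Real.sin (t * (x : ℝ)), by fun_prop⟩

/-- The generating set of trigonometric functions. -/
def trigSet : Set C((Icc (-C) C : Set ℝ), ℝ) :=
  {f | ∃ t : ℝ, f = ctMap C t ∨ f = stMap C t}

lemma ct_mem_span (t : ℝ) : ctMap C t ∈ Submodule.span ℝ (trigSet C) :=
  Submodule.subset_span ⟨t, Or.inl rfl⟩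

lemma st_mem_span (t : ℝ) : stMap C t ∈ Submodule.span ℝ (trigSet C) :=
  Submodule.subset_span ⟨t, Or.inr rfl⟩

lemma ct_mul_ct (s t : ℝ) :
    ctMap C s * ctMap C t = (1/2 : ℝ) • ctMap C (s - t) + (1/2 : ℝ) • ctMap C (s + t) := by
  ext x
  simp only [ContinuousMap.mul_apply, ContinuousMap.add_apply, ContinuousMap.smul_apply,
    ctMap, ContinuousMap.coe_mk, smul_eq_mul]
  rw [cos_mul_cos' (s * x) (t * x)]
  ring_nf

lemma st_mul_st (s t : ℝ) :
    stMap C s * stMap C t = (1/2 : ℝ) • ctMap C (s - t) - (1/2 : ℝ) • ctMap C (s + t) := by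
  ext x
  simp only [ContinuousMap.mul_apply, ContinuousMap.sub_apply, ContinuousMap.smul_apply,
    ctMap, stMap, ContinuousMap.coe_mk, smul_eq_mul]
  rw [sin_mul_sin' (s * x) (t * x)]
  ring_nf

lemma st_mul_ct (s t : ℝ) :
    stMap C s * ctMap C t = (1/2 : ℝ) • stMap C (s + t) + (1/2 : ℝ) • stMap C (s - t) := by
  ext x
  simp only [ContinuousMap.mul_apply, ContinuousMap.add_apply, ContinuousMap.smul_apply,
    ctMap, stMap, ContinuousMap.coe_mk, smul_eq_mul]
  rw [sin_mul_cos' (s * x) (t * x)]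
  ring_nf

lemma ct_mul_st (s t : ℝ) :
    ctMap C s * stMap C t = (1/2 : ℝ) • stMap C (s + t) - (1/2 : ℝ) • stMap C (s - t) := by
  ext x
  simp only [ContinuousMap.mul_apply, ContinuousMap.sub_apply, ContinuousMap.smul_apply,
    ctMap, stMap, ContinuousMap.coe_mk, smul_eq_mul]
  rw [cos_mul_sin' (s * x) (t * x)]
  ring_nf

lemma ct_zero : ctMap C 0 = 1 := by
  ext x; simp [ctMap]

lemma gen_mul_mem {a b : C((Icc (-C) C : Set ℝ), ℝ)}
    (ha : a ∈ trigSet C) (hb : b ∈ trigSet C) :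
    a * b ∈ Submodule.span ℝ (trigSet C) := by
  obtain ⟨s, hs | hs⟩ := ha <;> obtain ⟨t, ht | ht⟩ := hb <;> subst hs <;> subst ht
  · rw [ct_mul_ct]
    exact Submodule.add_mem _ (Submodule.smul_mem _ _ (ct_mem_span C _))
      (Submodule.smul_mem _ _ (ct_mem_span C _))
  · rw [ct_mul_st]
    exact Submodule.sub_mem _ (Submodule.smul_mem _ _ (st_mem_span C _))
      (Submodule.smul_mem _ _ (st_mem_span C _))
  · rw [st_mul_ct]
    exact Submodule.add_mem _ (Submodule.smul_mem _ _ (st_mem_span C _))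
      (Submodule.smul_mem _ _ (st_mem_span C _))
  · rw [st_mul_st]
    exact Submodule.sub_mem _ (Submodule.smul_mem _ _ (ct_mem_span C _))
      (Submodule.smul_mem _ _ (ct_mem_span C _))

lemma span_mul_mem {a b : C((Icc (-C) C : Set ℝ), ℝ)}
    (ha : a ∈ Submodule.span ℝ (trigSet C)) (hb : b ∈ Submodule.span ℝ (trigSet C)) :
    a * b ∈ Submodule.span ℝ (trigSet C) := by
  induction ha using Submodule.span_induction with
  | mem x hx =>
    induction hb using Submodule.span_induction with
    | mem y hy => exact gen_mul_mem C hx hy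
    | zero => simpa using Submodule.zero_mem _
    | add y z _ _ hy hz => rw [mul_add]; exact Submodule.add_mem _ hy hz
    | smul c y _ hy => rw [mul_smul_comm]; exact Submodule.smul_mem _ _ hy
  | zero => simpa using Submodule.zero_mem _
  | add x y _ _ hx hy => rw [add_mul]; exact Submodule.add_mem _ hx hy
  | smul c x _ hx => rw [smul_mul_assoc]; exact Submodule.smul_mem _ _ hx

/-- The trigonometric subalgebra of `C(Icc (-C) C, ℝ)`. -/
noncomputable def trigAlg : Subalgebra ℝ C((Icc (-C) C : Set ℝ), ℝ) where
  carrier := Submodule.span ℝ (trigSet C)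
  mul_mem' := span_mul_mem C
  add_mem' := fun h1 h2 => Submodule.add_mem _ h1 h2
  one_mem' := by rw [← ct_zero C]; exact ct_mem_span C 0
  zero_mem' := Submodule.zero_mem _
  algebraMap_mem' := fun r => by
    show (algebraMap ℝ C((Icc (-C) C : Set ℝ), ℝ)) r ∈ Submodule.span ℝ (trigSet C)
    rw [Algebra.algebraMap_eq_smul_one, ← ct_zero C]
    exact Submodule.smul_mem _ _ (ct_mem_span C 0)

lemma trigAlg_separatesPoints : (trigAlg C).SeparatesPoints := by
  intro x y hxy
  have hxy' : (x : ℝ) ≠ (y : ℝ) := fun h => hxy (Subtype.ext h)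
  set d : ℝ := (x : ℝ) - (y : ℝ) with hd
  have hdne : d ≠ 0 := sub_ne_zero.mpr hxy'
  set t : ℝ := Real.pi / d with htdef
  have hkey : t * (x : ℝ) - t * (y : ℝ) = Real.pi := by
    rw [← mul_sub, ← hd, htdef, div_mul_cancel₀ _ hdne]
  by_cases hc : Real.cos (t * (x : ℝ)) = Real.cos (t * (y : ℝ))
  · -- then the sines must differ
    refine ⟨_, ⟨stMap C t, st_mem_span C t, rfl⟩, ?_⟩
    simp only [stMap, ContinuousMap.coe_mk]
    intro hs
    have h1 : Real.cos (t * (x : ℝ) - t * (y : ℝ)) = 1 := by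
      rw [Real.cos_sub, hc, hs]
      rw [← Real.sin_sq_add_cos_sq (t * (y : ℝ))]
      ring
    rw [hkey, Real.cos_pi] at h1
    norm_num at h1
  · exact ⟨_, ⟨ctMap C t, ct_mem_span C t, rfl⟩, by simpa [ctMap] using hc⟩

end Aux

section Main

variable {Ω : Type*} [MeasurableSpace Ω] {μ : Measure Ω} [IsProbabilityMeasure μ]
  {U : Ω → ℝ} {T : Ω → ℝ}

lemma integrable_mul_bdd (hU : Integrable U μ) {H : Ω → ℝ}
    (hm : AEStronglyMeasurable H μ) (hb : ∃ B, ∀ ω, |H ω| ≤ B) :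
    Integrable (fun ω => U ω * H ω) μ := by
  have := hU.bdd_mul hm (c := hb.choose)
    (Filter.Eventually.of_forall (by simpa [Real.norm_eq_abs] using hb.choose_spec))
  simpa [mul_comm] using this

/-- Key approximation step: the integrals against all continuous functions of `T` vanish. -/
lemma integral_continuous_eq_zero {C : ℝ} (hC : 0 ≤ C)
    (hU : Integrable U μ) (hT : Measurable T) (hTC : ∀ ω, |T ω| ≤ C)
    (hcos : ∀ t : ℝ, ∫ ω, U ω * Real.cos (t * T ω) ∂μ = 0)
    (hsin : ∀ t : ℝ, ∫ ω, U ω * Real.sin (t * T ω) ∂μ = 0)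
    (f : ℝ → ℝ) (hf : Continuous f) :
    ∫ ω, U ω * f (T ω) ∂μ = 0 := by
  haveI : CompactSpace (Icc (-C) C : Set ℝ) := isCompact_iff_compactSpace.mp isCompact_Icc
  have hTmem : ∀ ω, T ω ∈ Icc (-C) C := fun ω => abs_le.mp (hTC ω)
  -- the property transported through the span
  have hQ : ∀ h ∈ Submodule.span ℝ (trigSet C), ∃ H : ℝ → ℝ,
      Measurable H ∧ (∃ B, ∀ x, |H x| ≤ B) ∧
      (∀ x : (Icc (-C) C : Set ℝ), H (x : ℝ) = h x) ∧
      ∫ ω, U ω * H (T ω) ∂μ = 0 := by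
    intro h hh
    induction hh using Submodule.span_induction with
    | mem g hg =>
      obtain ⟨t, hgt | hgt⟩ := hg <;> subst hgt
      · exact ⟨fun x => Real.cos (t * x), by fun_prop,
          ⟨1, fun x => Real.abs_cos_le_one _⟩, fun x => rfl, hcos t⟩
      · exact ⟨fun x => Real.sin (t * x), by fun_prop,
          ⟨1, fun x => Real.abs_sin_le_one _⟩, fun x => rfl, hsin t⟩
    | zero => exact ⟨0, measurable_const, ⟨0, fun x => by simp⟩, fun x => by simp, by simp⟩
    | add g₁ g₂ hg₁ hg₂ ih₁ ih₂ =>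
      obtain ⟨H₁, hm₁, ⟨B₁, hb₁⟩, ha₁, hi₁⟩ := ih₁
      obtain ⟨H₂, hm₂, ⟨B₂, hb₂⟩, ha₂, hi₂⟩ := ih₂
      refine ⟨H₁ + H₂, hm₁.add hm₂, ⟨B₁ + B₂, fun x =>
        (abs_add_le _ _).trans (add_le_add (hb₁ x) (hb₂ x))⟩,
        fun x => by simp [ha₁ x, ha₂ x], ?_⟩
      have e1 : Integrable (fun ω => U ω * H₁ (T ω)) μ :=
        integrable_mul_bdd hU ((hm₁.comp hT).aestronglyMeasurable) ⟨B₁, fun ω => hb₁ _⟩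
      have e2 : Integrable (fun ω => U ω * H₂ (T ω)) μ :=
        integrable_mul_bdd hU ((hm₂.comp hT).aestronglyMeasurable) ⟨B₂, fun ω => hb₂ _⟩
      have : ∫ ω, (U ω * H₁ (T ω) + U ω * H₂ (T ω)) ∂μ = 0 := by
        rw [integral_add e1 e2, hi₁, hi₂]; ring
      simpa [Pi.add_apply, mul_add] using this
    | smul c g hg ih =>
      obtain ⟨H, hm, ⟨B, hb⟩, ha, hi⟩ := ih
      refine ⟨fun x => c * H x, by fun_prop, ⟨|c| * B, fun x => by
        rw [abs_mul]; exact mul_le_mul_of_nonneg_left (hb x) (abs_nonneg c)⟩,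
        fun x => by simp [ha x], ?_⟩
      have : (fun ω => U ω * (c * H (T ω))) = fun ω => c * (U ω * H (T ω)) := by
        funext ω; ring
      rw [this, integral_const_mul, hi, mul_zero]
  -- bound f on the interval via epsilon approximation
  set I := ∫ ω, U ω * f (T ω) ∂μ with hI
  have key : ∀ ε : ℝ, 0 < ε → |I| ≤ ε * (∫ ω, |U ω| ∂μ) := by
    intro ε hε
    obtain ⟨g, hg⟩ := ContinuousMap.exists_mem_subalgebra_near_continuous_of_separatesPoints
      (trigAlg C) (trigAlg_separatesPoints C)
      (fun x : (Icc (-C) C : Set ℝ) => f (x : ℝ)) (hf.comp continuous_subtype_val) ε hε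
    obtain ⟨H, hHm, ⟨B, hB⟩, hHa, hHi⟩ := hQ (g : C((Icc (-C) C : Set ℝ), ℝ)) g.2
    -- pointwise estimate along T
    have hpt : ∀ ω, |f (T ω) - H (T ω)| ≤ ε := by
      intro ω
      have := hg ⟨T ω, hTmem ω⟩
      rw [Real.norm_eq_abs] at this
      have heq : ((g : C((Icc (-C) C : Set ℝ), ℝ)) ⟨T ω, hTmem ω⟩ : ℝ) = H (T ω) :=
        (hHa ⟨T ω, hTmem ω⟩).symm
      calc |f (T ω) - H (T ω)| = |(H (T ω) - f (T ω))| := by rw [abs_sub_comm]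
        _ ≤ ε := by rw [← heq]; exact le_of_lt this
    -- integrability
    have hfbdd : ∀ ω, |f (T ω)| ≤ B + ε := by
      intro ω
      calc |f (T ω)| ≤ |H (T ω)| + |f (T ω) - H (T ω)| := by
            have := abs_add_le (H (T ω)) (f (T ω) - H (T ω)); simpa using this
        _ ≤ B + ε := add_le_add (hB _) (hpt ω)
    have hif : Integrable (fun ω => U ω * f (T ω)) μ :=
      integrable_mul_bdd hU (((hf.measurable).comp hT).aestronglyMeasurable)
        ⟨B + ε, hfbdd⟩
    have hiH : Integrable (fun ω => U ω * H (T ω)) μ :=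
      integrable_mul_bdd hU ((hHm.comp hT).aestronglyMeasurable) ⟨B, fun ω => hB _⟩
    have hsplit : I = ∫ ω, (U ω * f (T ω) - U ω * H (T ω)) ∂μ := by
      rw [integral_sub hif hiH, hHi, sub_zero]
    rw [hsplit]
    calc |∫ ω, (U ω * f (T ω) - U ω * H (T ω)) ∂μ|
        ≤ ∫ ω, |U ω * f (T ω) - U ω * H (T ω)| ∂μ := by
          simpa [Real.norm_eq_abs] using
            norm_integral_le_integral_norm (fun ω => U ω * f (T ω) - U ω * H (T ω)) (μ := μ)
      _ ≤ ∫ ω, |U ω| * ε ∂μ := by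
          have hsubint : Integrable (fun ω => U ω * f (T ω) - U ω * H (T ω)) μ := hif.sub hiH
          apply integral_mono hsubint.abs (hU.abs.mul_const ε)
          intro ω
          show |U ω * f (T ω) - U ω * H (T ω)| ≤ |U ω| * ε
          have : U ω * f (T ω) - U ω * H (T ω) = U ω * (f (T ω) - H (T ω)) := by ring
          rw [this, abs_mul]
          exact mul_le_mul_of_nonneg_left (hpt ω) (abs_nonneg _)
      _ = ε * ∫ ω, |U ω| ∂μ := by rw [integral_mul_const]; ring
  -- conclude I = 0
  have hnn : 0 ≤ ∫ ω, |U ω| ∂μ := integral_nonneg (fun ω => abs_nonneg _)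
  have habs : |I| ≤ 0 := by
    set c := ∫ ω, |U ω| ∂μ with hc
    refine le_of_forall_pos_le_add fun ε hε => ?_
    have hε' : 0 < ε / (c + 1) := by positivity
    have h1 := key _ hε'
    have h2 : ε / (c + 1) * c ≤ ε := by
      rw [div_mul_eq_mul_div, div_le_iff₀ (by positivity)]
      nlinarith
    linarith
  have : |I| = 0 := le_antisymm habs (abs_nonneg I)
  exact abs_eq_zero.mp this

end Main

/-- For integrable `U` and bounded real `T`:
`E[U | T] = 0` a.s. iff `E[U · (cos(tT) + sin(tT))] = 0` for all `t ∈ ℝ`. -/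
theorem stmt5 {Ω : Type*} [MeasurableSpace Ω] (μ : Measure Ω) [IsProbabilityMeasure μ]
    (U : Ω → ℝ) (T : Ω → ℝ) (hU : Integrable U μ) (hT : Measurable T)
    (hTbdd : ∃ C : ℝ, ∀ ω, |T ω| ≤ C) :
    (μ[U | MeasurableSpace.comap T Real.measurableSpace] =ᵐ[μ] 0) ↔
      ∀ t : ℝ, ∫ ω, U ω * (Real.cos (t * T ω) + Real.sin (t * T ω)) ∂μ = 0 := by
  have hm : MeasurableSpace.comap T Real.measurableSpace ≤ ‹MeasurableSpace Ω› :=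
    measurable_iff_comap_le.mp hT
  constructor
  · -- forward direction
    intro hce t
    set g : Ω → ℝ := fun ω => Real.cos (t * T ω) + Real.sin (t * T ω) with hgdef
    have hTm : Measurable[MeasurableSpace.comap T Real.measurableSpace] T :=
      measurable_iff_comap_le.mpr le_rfl
    have hφ : Measurable (fun x : ℝ => Real.cos (t * x) + Real.sin (t * x)) := by fun_prop
    have hgm : StronglyMeasurable[MeasurableSpace.comap T Real.measurableSpace] g :=
      (hφ.comp hTm).stronglyMeasurable
    have hgb : ∀ ω, |g ω| ≤ 2 := by
      intro ω
      calc |g ω| ≤ |Real.cos (t * T ω)| + |Real.sin (t * T ω)| := abs_add_le _ _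
        _ ≤ 1 + 1 := add_le_add (Real.abs_cos_le_one _) (Real.abs_sin_le_one _)
        _ = 2 := by norm_num
    have hint : Integrable (fun ω => g ω * U ω) μ :=
      hU.bdd_mul (hgm.mono hm).aestronglyMeasurable (c := 2)
        (Filter.Eventually.of_forall (by simpa [Real.norm_eq_abs] using hgb))
    have h1 : μ[fun ω => g ω * U ω | MeasurableSpace.comap T Real.measurableSpace]
        =ᵐ[μ] fun ω => g ω * (μ[U | MeasurableSpace.comap T Real.measurableSpace]) ω := by
      have := condExp_mul_of_stronglyMeasurable_left hgm hint hU
      exact this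
    have h2 : (fun ω => g ω * (μ[U | MeasurableSpace.comap T Real.measurableSpace]) ω)
        =ᵐ[μ] (0 : Ω → ℝ) := by
      filter_upwards [hce] with ω hω
      rw [Pi.zero_apply] at hω
      simp [hω]
    have h3 : ∫ ω, g ω * U ω ∂μ = 0 := by
      rw [← integral_condExp hm]
      rw [integral_congr_ae (h1.trans h2)]
      simp
    calc ∫ ω, U ω * g ω ∂μ = ∫ ω, g ω * U ω ∂μ := by
          congr 1; funext ω; ring
      _ = 0 := h3
  · -- backward direction
    intro hint
    obtain ⟨C₀, hC₀⟩ := hTbdd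
    have hΩ : Nonempty Ω := by
      by_contra h
      rw [not_nonempty_iff] at h
      have : μ Set.univ = 0 := by simp [Set.univ_eq_empty_iff.mpr h]
      simpa [this] using (measure_univ (μ := μ))
    obtain ⟨ω₀⟩ := hΩ
    set C := |C₀| with hCdef
    have hC : 0 ≤ C := abs_nonneg _
    have hTC : ∀ ω, |T ω| ≤ C := fun ω => (hC₀ ω).trans (le_abs_self C₀)
    -- separate cos and sin
    have hintg : ∀ t : ℝ, Integrable (fun ω => U ω *
        (Real.cos (t * T ω) + Real.sin (t * T ω))) μ := by
      intro t
      apply integrable_mul_bdd hU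
      · exact ((by fun_prop : Measurable fun x : ℝ =>
          Real.cos (t * x) + Real.sin (t * x)).comp hT).aestronglyMeasurable
      · refine ⟨2, fun ω => ?_⟩
        calc |Real.cos (t * T ω) + Real.sin (t * T ω)|
            ≤ |Real.cos (t * T ω)| + |Real.sin (t * T ω)| := abs_add_le _ _
          _ ≤ 1 + 1 := add_le_add (Real.abs_cos_le_one _) (Real.abs_sin_le_one _)
          _ = 2 := by norm_num
    have hcos : ∀ t : ℝ, ∫ ω, U ω * Real.cos (t * T ω) ∂μ = 0 := by
      intro t
      have h1 := hint t
      have h2 := hint (-t)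
      simp only [neg_mul, Real.cos_neg, Real.sin_neg] at h2
      have e1 := hintg t
      have e2 := hintg (-t)
      simp only [neg_mul, Real.cos_neg, Real.sin_neg] at e2
      have : ∫ ω, (U ω * (Real.cos (t * T ω) + Real.sin (t * T ω))
          + U ω * (Real.cos (t * T ω) + -Real.sin (t * T ω))) ∂μ = 0 := by
        rw [integral_add e1 e2, h1, h2]; ring
      have heq : (fun ω => U ω * (Real.cos (t * T ω) + Real.sin (t * T ω))
          + U ω * (Real.cos (t * T ω) + -Real.sin (t * T ω)))
          = fun ω => 2 * (U ω * Real.cos (t * T ω)) := by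
        funext ω; ring
      rw [heq, integral_const_mul] at this
      linarith
    have hsin : ∀ t : ℝ, ∫ ω, U ω * Real.sin (t * T ω) ∂μ = 0 := by
      intro t
      have h1 := hint t
      have h2 := hint (-t)
      simp only [neg_mul, Real.cos_neg, Real.sin_neg] at h2
      have e1 := hintg t
      have e2 := hintg (-t)
      simp only [neg_mul, Real.cos_neg, Real.sin_neg] at e2
      have : ∫ ω, (U ω * (Real.cos (t * T ω) + Real.sin (t * T ω))
          - U ω * (Real.cos (t * T ω) + -Real.sin (t * T ω))) ∂μ = 0 := by
        rw [integral_sub e1 e2, h1, h2]; ring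
      have heq : (fun ω => U ω * (Real.cos (t * T ω) + Real.sin (t * T ω))
          - U ω * (Real.cos (t * T ω) + -Real.sin (t * T ω)))
          = fun ω => 2 * (U ω * Real.sin (t * T ω)) := by
        funext ω; ring
      rw [heq, integral_const_mul] at this
      linarith
    have hcont : ∀ f : ℝ → ℝ, Continuous f → ∫ ω, U ω * f (T ω) ∂μ = 0 :=
      fun f hf => integral_continuous_eq_zero hC hU hT hTC hcos hsin f hf
    have hU0 : ∫ ω, U ω ∂μ = 0 := by
      have := hcont (fun _ => 1) continuous_const
      simpa using this
    -- indicator of Iic via approximation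
    have hIic : ∀ a : ℝ, ∫ ω in T ⁻¹' (Iic a), U ω ∂μ = 0 := by
      intro a
      set f : ℕ → ℝ → ℝ := fun n x => max 0 (min 1 (1 - n * (x - a))) with hfdef
      have hfc : ∀ n, Continuous (f n) := by
        intro n; apply continuous_const.max; apply continuous_const.min; fun_prop
      have hf01 : ∀ n x, 0 ≤ f n x ∧ f n x ≤ 1 := by
        intro n x
        constructor
        · exact le_max_left _ _
        · apply max_le (by norm_num) (min_le_left _ _)
      have hflim : ∀ x : ℝ, Filter.Tendsto (fun n => f n x) Filter.atTop
          (nhds (Set.indicator (Iic a) (fun _ => (1:ℝ)) x)) := by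
        intro x
        by_cases hx : x ≤ a
        · have : ∀ n : ℕ, f n x = 1 := by
            intro n
            have h1 : (1:ℝ) ≤ 1 - n * (x - a) := by nlinarith [Nat.cast_nonneg (α := ℝ) n]
            simp only [hfdef]
            rw [min_eq_left h1, max_eq_right (by norm_num : (0:ℝ) ≤ 1)]
          rw [Set.indicator_of_mem (by exact hx : x ∈ Iic a)]
          simpa [this] using tendsto_const_nhds
        · push_neg at hx
          rw [Set.indicator_of_notMem (by simpa using hx.not_ge : x ∉ Iic a)]
          have hev : ∀ᶠ n : ℕ in Filter.atTop, f n x = 0 := by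
            obtain ⟨N, hN⟩ := exists_nat_gt (1 / (x - a))
            refine Filter.eventually_atTop.mpr ⟨N, fun n hn => ?_⟩
            have hxa : 0 < x - a := by linarith
            have h1 : 1 - (n:ℝ) * (x - a) ≤ 0 := by
              have : (N:ℝ) ≤ n := Nat.cast_le.mpr hn
              have h2 : 1 / (x - a) < (n:ℝ) := lt_of_lt_of_le hN this
              have h3 : 1 < (n:ℝ) * (x - a) := by
                rw [div_lt_iff₀ hxa] at h2; linarith
              linarith
            have h2 : min 1 (1 - (n:ℝ) * (x - a)) = 1 - (n:ℝ) * (x - a) :=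
              min_eq_right (by linarith)
            simp only [hfdef]
            rw [h2, max_eq_left h1]
          exact Filter.Tendsto.congr' (hev.mono fun n h => h.symm) tendsto_const_nhds
      -- dominated convergence
      have hdom := MeasureTheory.tendsto_integral_of_dominated_convergence
        (F := fun n ω => U ω * f n (T ω))
        (f := fun ω => U ω * Set.indicator (Iic a) (fun _ => (1:ℝ)) (T ω))
        (bound := fun ω => |U ω|)
        (fun n => (hU.aestronglyMeasurable.mul
          (((hfc n).measurable.comp hT).aestronglyMeasurable)))
        hU.abs
        (fun n => Filter.Eventually.of_forall fun ω => by
          rw [Real.norm_eq_abs, abs_mul]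
          have h01 := hf01 n (T ω)
          calc |U ω| * |f n (T ω)| ≤ |U ω| * 1 := by
                apply mul_le_mul_of_nonneg_left _ (abs_nonneg _)
                rw [abs_le]; exact ⟨by linarith [h01.1], h01.2⟩
            _ = |U ω| := mul_one _)
        (Filter.Eventually.of_forall fun ω =>
          (hflim (T ω)).const_mul (U ω) |>.congr (fun n => rfl))
      have hzero : ∀ n : ℕ, ∫ ω, U ω * f n (T ω) ∂μ = 0 := fun n => hcont (f n) (hfc n)
      have hlim0 : ∫ ω, U ω * Set.indicator (Iic a) (fun _ => (1:ℝ)) (T ω) ∂μ = 0 := by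
        have h1 : Filter.Tendsto (fun n : ℕ => ∫ ω, U ω * f n (T ω) ∂μ) Filter.atTop
            (nhds (∫ ω, U ω * Set.indicator (Iic a) (fun _ => (1:ℝ)) (T ω) ∂μ)) := hdom
        have h2 : Filter.Tendsto (fun n : ℕ => ∫ ω, U ω * f n (T ω) ∂μ) Filter.atTop
            (nhds 0) := by
          simp only [hzero]; exact tendsto_const_nhds
        exact tendsto_nhds_unique h1 h2
      have heq : (fun ω => U ω * Set.indicator (Iic a) (fun _ => (1:ℝ)) (T ω))
          = Set.indicator (T ⁻¹' (Iic a)) U := by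
        funext ω
        by_cases hω : T ω ∈ Iic a
        · rw [Set.indicator_of_mem hω, Set.indicator_of_mem (by exact hω), mul_one]
        · rw [Set.indicator_of_notMem hω, Set.indicator_of_notMem (by exact hω), mul_zero]
      rw [heq] at hlim0
      rw [← integral_indicator (hT measurableSet_Iic)]
      exact hlim0
    -- π-λ argument to all Borel sets
    have hAll : ∀ A : Set ℝ, MeasurableSet A → ∫ ω in T ⁻¹' A, U ω ∂μ = 0 := by
      have h_eq : (Real.measurableSpace : MeasurableSpace ℝ)
          = MeasurableSpace.generateFrom (Set.range Iic) :=
        (BorelSpace.measurable_eq (α := ℝ)).trans (borel_eq_generateFrom_Iic ℝ)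
      intro A hA
      refine MeasurableSpace.induction_on_inter
        (C := fun A _ => ∫ ω in T ⁻¹' A, U ω ∂μ = 0) h_eq isPiSystem_Iic (by simp) ?_ ?_ ?_ A hA
      · rintro t ⟨a, rfl⟩
        exact hIic a
      · intro A hA ih
        have h1 : ∫ ω in T ⁻¹' A, U ω ∂μ + ∫ ω in (T ⁻¹' A)ᶜ, U ω ∂μ = ∫ ω, U ω ∂μ :=
          integral_add_compl (hT hA) hU
        rw [ih, hU0] at h1
        rw [Set.preimage_compl]
        linarith
      · intro g hdisj hmeas ih
        rw [Set.preimage_iUnion]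
        rw [integral_iUnion (fun i => hT (hmeas i))
          (fun i j hij => (hdisj hij).preimage T) hU.integrableOn]
        simp [ih]
    -- conclude via uniqueness of conditional expectation
    refine (ae_eq_condExp_of_forall_setIntegral_eq hm hU ?_ ?_ ?_).symm
    · intro s _ _
      exact integrableOn_zero
    · intro s hs _
      obtain ⟨A, hA, rfl⟩ := hs
      simpa using (hAll A hA).symm
    · exact StronglyMeasurable.aestronglyMeasurable
        (@stronglyMeasurable_zero _ _ (MeasurableSpace.comap T Real.measurableSpace) _ _)
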